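/- For every x > 0, the exponential integral E_1(x) = ∫_x^∞ (e^{−r}/r) dr satisfies (1/2) e^{−x} ln(1 + 2/x) < E_1(x) < e^{−x} ln(1 + 1/x). -/

import Mathlib

open MeasureTheory Real

-- bound by C * exp(-r) implies integrable on Ioi x
lemma intOn_of_bound {x C : ℝ} {f : ℝ → ℝ}
    (hm : AEStronglyMeasurable f (volume.restrict (Set.Ioi x)))
    (hb : ∀ r ∈ Set.Ioi x, |f r| ≤ C * Real.exp (-r)) : IntegrableOn f (Set.Ioi x) := by
  refine Integrable.mono' (g := fun r => C * Real.exp (-r)) ?_ hm ?_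
  · have h := (exp_neg_integrableOn_Ioi x one_pos).const_mul C
    simpa using h
  · filter_upwards [ae_restrict_mem measurableSet_Ioi] with r hr
    simpa using hb r hr

lemma integral_pos_Ioi {x : ℝ} {h : ℝ → ℝ} (hi : IntegrableOn h (Set.Ioi x))
    (hp : ∀ r ∈ Set.Ioi x, 0 < h r) : 0 < ∫ r in Set.Ioi x, h r := by
  rw [setIntegral_pos_iff_support_of_nonneg_ae ?_ hi]
  · refine lt_of_lt_of_le ?_ (measure_mono (fun r hr => ⟨(hp r hr).ne', hr⟩ :
      Set.Ioi x ⊆ Function.support h ∩ Set.Ioi x))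
    simp [Real.volume_Ioi]
  · filter_upwards [ae_restrict_mem measurableSet_Ioi] with r hr
    exact (hp r hr).le


lemma ineqA {r : ℝ} (hr : 0 < r) : 1 / (r + 1) < Real.log (1 + 1 / r) := by
  have h1 : Real.exp (-(1 / (r + 1))) > 1 - 1 / (r + 1) := by
    have hne : -(1 / (r + 1)) ≠ 0 := by
      have : (0:ℝ) < 1 / (r + 1) := by positivity
      linarith
    have := Real.add_one_lt_exp hne
    linarith
  have h2 : (1 : ℝ) - 1 / (r + 1) = r / (r + 1) := by field_simp; ring
  have h3 : Real.log (r / (r + 1)) < -(1 / (r + 1)) := by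
    rw [Real.log_lt_iff_lt_exp (by positivity)]
    rw [h2] at h1; linarith
  have h4 : Real.log (1 + 1 / r) = -Real.log (r / (r + 1)) := by
    rw [← Real.log_inv]
    congr 1
    field_simp
  linarith

lemma log_lt_half {y : ℝ} (hy : 1 < y) : Real.log y < (y - 1 / y) / 2 := by
  have hy0 : 0 < y := by linarith
  have ht0 : 0 < Real.log y := Real.log_pos hy
  generalize hT : Real.log y = t at *
  have hyt : y = Real.exp t := by rw [← hT, Real.exp_log hy0]
  have hA0 : (0:ℝ) < 1 + t + t ^ 2 / 2 + t ^ 3 / 6 := by positivity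
  have hAle : 1 + t + t ^ 2 / 2 + t ^ 3 / 6 ≤ Real.exp t := by
    have h := Real.sum_le_exp_of_nonneg ht0.le 4
    have he : ∑ i ∈ Finset.range 4, t ^ i / (Nat.factorial i : ℝ)
        = 1 + t + t ^ 2 / 2 + t ^ 3 / 6 := by
      norm_num [Finset.sum_range_succ, Nat.factorial]
    rw [he] at h
    exact h
  have hinv : Real.exp (-t) ≤ (1 + t + t ^ 2 / 2 + t ^ 3 / 6)⁻¹ := by
    rw [Real.exp_neg]
    exact inv_anti₀ hA0 hAle
  have key : (1 + t + t ^ 2 / 2 + t ^ 3 / 6) - (1 + t + t ^ 2 / 2 + t ^ 3 / 6)⁻¹ > 2 * t := by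
    rw [gt_iff_lt, ← sub_pos]
    have heq : (1 + t + t ^ 2 / 2 + t ^ 3 / 6) - (1 + t + t ^ 2 / 2 + t ^ 3 / 6)⁻¹ - 2 * t
        = ((1 + t + t ^ 2 / 2 + t ^ 3 / 6) ^ 2 - 2 * t * (1 + t + t ^ 2 / 2 + t ^ 3 / 6) - 1)
          / (1 + t + t ^ 2 / 2 + t ^ 3 / 6) := by
      field_simp
      ring
    rw [heq]
    apply div_pos _ hA0
    nlinarith [pow_pos ht0 3, pow_pos ht0 4, pow_pos ht0 5, pow_pos ht0 6]
  have h1y : 1 / y = Real.exp (-t) := by rw [hyt, Real.exp_neg]; simp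
  rw [h1y, hyt]
  linarith

lemma ineqB {r : ℝ} (hr : 0 < r) : Real.log (1 + 2 / r) < 1 / r + 1 / (r + 2) := by
  have h2r : (0:ℝ) < 2 / r := by positivity
  have hy : (1 : ℝ) < 1 + 2 / r := by linarith
  have h := log_lt_half hy
  have heq : (1 + 2 / r - 1 / (1 + 2 / r)) / 2 = 1 / r + 1 / (r + 2) := by
    rw [div_eq_iff (by norm_num : (2:ℝ) ≠ 0)]
    field_simp
    ring
  rw [heq] at h
  exact h

lemma repr_lemma {c x : ℝ} (hc : 0 < c) (hx : 0 < x) :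
    ((1 / c) * Real.exp (-x) * Real.log (1 + c / x)
      = ∫ r in Set.Ioi x,
          (1 / c) * Real.exp (-r) * (Real.log (1 + c / r) + 1 / r - 1 / (r + c)))
    ∧ IntegrableOn
        (fun r => (1 / c) * Real.exp (-r) * (Real.log (1 + c / r) + 1 / r - 1 / (r + c)))
        (Set.Ioi x) := by
  set f : ℝ → ℝ := fun r => (1 / c) * Real.exp (-r) * (Real.log (r + c) - Real.log r) with hf
  set f' : ℝ → ℝ := fun r =>
    (1 / c) * ((-Real.exp (-r)) * (Real.log (r + c) - Real.log r)
      + Real.exp (-r) * ((r + c)⁻¹ - r⁻¹)) with hf'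
  have hlog : ∀ r : ℝ, 0 < r → Real.log (1 + c / r) = Real.log (r + c) - Real.log r := by
    intro r hr
    rw [show (1 : ℝ) + c / r = (r + c) / r by field_simp, Real.log_div (by positivity) hr.ne']
  have hderiv0 : ∀ r : ℝ, 0 < r → HasDerivAt f (f' r) r := by
    intro r hr0
    have hexp : HasDerivAt (fun r : ℝ => Real.exp (-r)) (-Real.exp (-r)) r := by
      simpa [Function.comp_def] using (Real.hasDerivAt_exp (-r)).comp r ((hasDerivAt_id r).neg)
    have hlogc : HasDerivAt (fun r : ℝ => Real.log (r + c)) ((r + c)⁻¹) r := by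
      simpa [Function.comp_def] using (Real.hasDerivAt_log (by positivity : r + c ≠ 0)).comp r
        ((hasDerivAt_id r).add_const c)
    have hlogr : HasDerivAt Real.log r⁻¹ r := Real.hasDerivAt_log hr0.ne'
    have h := ((hexp.mul (hlogc.sub hlogr)).const_mul (1 / c))
    have hfe : f = fun y => 1 / c * (Real.exp (-y) * (Real.log (y + c) - Real.log y)) := by
      funext y; rw [hf]; ring
    rw [hfe]
    exact h
  have hcont : ContinuousWithinAt f (Set.Ici x) x :=
    ((hderiv0 x hx).continuousAt).continuousWithinAt
  -- limit at infinity
  have htend : Filter.Tendsto f Filter.atTop (nhds 0) := by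
    have h1 : Filter.Tendsto (fun r : ℝ => Real.exp (-r)) Filter.atTop (nhds 0) := by
      simpa using Real.tendsto_exp_neg_atTop_nhds_zero
    have h2 : Filter.Tendsto (fun r : ℝ => Real.log (r + c) - Real.log r)
        Filter.atTop (nhds 0) := by
      have h3 : Filter.Tendsto (fun r : ℝ => (1 : ℝ) + c / r) Filter.atTop (nhds 1) := by
        have : Filter.Tendsto (fun r : ℝ => c / r) Filter.atTop (nhds 0) :=
          Filter.Tendsto.div_atTop tendsto_const_nhds Filter.tendsto_id
        simpa using tendsto_const_nhds.add this
      have h4 : Filter.Tendsto (fun r : ℝ => Real.log (1 + c / r)) Filter.atTop (nhds 0) := by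
        have := (Real.continuousAt_log one_ne_zero).tendsto.comp h3
        simpa [Function.comp_def] using this
      refine h4.congr' ?_
      filter_upwards [Filter.eventually_gt_atTop (0:ℝ)] with r hr
      exact hlog r hr
    have := (tendsto_const_nhds (x := (1:ℝ)/c)).mul (h1.mul h2)
    simp only [mul_zero] at this
    refine this.congr ?_
    intro r
    rw [hf]
    ring
  -- integrability of f'
  have hmono : ∀ r : ℝ, x < r → Real.log (1 + c / r) ≤ Real.log (1 + c / x) := by
    intro r hr
    have hr0 : 0 < r := lt_trans hx hr
    have hcr : c / r ≤ c / x := div_le_div_of_nonneg_left hc.le hx hr.le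
    have hcrp : 0 < c / r := div_pos hc hr0
    exact Real.log_le_log (by linarith) (by linarith)
  have hbound : ∀ r ∈ Set.Ioi x, |f' r| ≤ ((1 / c) * (Real.log (1 + c / x) + 2 / x)) * Real.exp (-r) := by
    intro r hr
    have hr0 : 0 < r := lt_trans hx hr
    have hrx : x < r := hr
    have hl1 : 0 ≤ Real.log (r + c) - Real.log r := by
      rw [← hlog r hr0]
      apply Real.log_nonneg
      have : 0 ≤ c / r := by positivity
      linarith
    have hl2 : Real.log (r + c) - Real.log r ≤ Real.log (1 + c / x) := by
      rw [← hlog r hr0]; exact hmono r hrx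
    have hi1 : (r + c)⁻¹ ≤ r⁻¹ := by
      apply inv_anti₀ hr0; linarith
    have hi2 : r⁻¹ ≤ 1 / x := by
      rw [one_div]
      exact inv_anti₀ hx hrx.le
    have hi3 : (0:ℝ) < (r + c)⁻¹ := by positivity
    have he : 0 < Real.exp (-r) := Real.exp_pos _
    rw [hf']
    rw [abs_mul, abs_of_nonneg (by positivity : (0:ℝ) ≤ 1 / c)]
    have habs : |(-Real.exp (-r)) * (Real.log (r + c) - Real.log r)
        + Real.exp (-r) * ((r + c)⁻¹ - r⁻¹)|
        ≤ Real.exp (-r) * (Real.log (1 + c / x) + 2 / x) := by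
      have := abs_add_le ((-Real.exp (-r)) * (Real.log (r + c) - Real.log r))
        (Real.exp (-r) * ((r + c)⁻¹ - r⁻¹))
      have e1 : |(-Real.exp (-r)) * (Real.log (r + c) - Real.log r)|
          ≤ Real.exp (-r) * Real.log (1 + c / x) := by
        rw [abs_mul, abs_neg, abs_of_pos he, abs_of_nonneg hl1]
        exact mul_le_mul_of_nonneg_left hl2 he.le
      have e2 : |Real.exp (-r) * ((r + c)⁻¹ - r⁻¹)| ≤ Real.exp (-r) * (2 / x) := by
        rw [abs_mul, abs_of_pos he]
        apply mul_le_mul_of_nonneg_left _ he.le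
        rw [abs_le]
        have hx1 : (0:ℝ) < 1 / x := by positivity
        have h2x : (2:ℝ) / x = 2 * (1 / x) := by ring
        constructor <;> [linarith; linarith]
      calc |(-Real.exp (-r)) * (Real.log (r + c) - Real.log r)
            + Real.exp (-r) * ((r + c)⁻¹ - r⁻¹)|
          ≤ _ + _ := this
        _ ≤ Real.exp (-r) * Real.log (1 + c / x) + Real.exp (-r) * (2 / x) := by
            exact add_le_add e1 e2
        _ = Real.exp (-r) * (Real.log (1 + c / x) + 2 / x) := by ring
    calc (1 / c) * |(-Real.exp (-r)) * (Real.log (r + c) - Real.log r)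
          + Real.exp (-r) * ((r + c)⁻¹ - r⁻¹)|
        ≤ (1 / c) * (Real.exp (-r) * (Real.log (1 + c / x) + 2 / x)) := by
          exact mul_le_mul_of_nonneg_left habs (by positivity)
      _ = ((1 / c) * (Real.log (1 + c / x) + 2 / x)) * Real.exp (-r) := by ring
  have hcontOn : ContinuousOn f' (Set.Ioi x) := by
    rw [hf']
    apply ContinuousOn.mul continuousOn_const
    apply ContinuousOn.add
    · apply ContinuousOn.mul
      · exact ((Real.continuous_exp.comp continuous_neg).neg).continuousOn
      · apply ContinuousOn.sub
        · exact ContinuousOn.log (by fun_prop) (fun r hr => by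
            have : 0 < r := lt_trans hx hr; positivity)
        · exact ContinuousOn.log continuousOn_id (fun r hr => (lt_trans hx hr).ne')
    · apply ContinuousOn.mul
      · exact (Real.continuous_exp.comp continuous_neg).continuousOn
      · apply ContinuousOn.sub
        · exact ContinuousOn.inv₀ (by fun_prop) (fun r hr => by
            have : 0 < r := lt_trans hx hr; positivity)
        · exact ContinuousOn.inv₀ continuousOn_id (fun r hr => (lt_trans hx hr).ne')
  have hint : IntegrableOn f' (Set.Ioi x) :=
    intOn_of_bound (hcontOn.aestronglyMeasurable measurableSet_Ioi) hbound
  have hFTC := integral_Ioi_of_hasDerivAt_of_tendsto hcont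
    (fun r hr => hderiv0 r (lt_trans hx hr)) hint htend
  have hfx : f x = ∫ r in Set.Ioi x, (-f' r) := by
    rw [integral_neg, hFTC]; ring
  have hL : (1 / c) * Real.exp (-x) * Real.log (1 + c / x) = f x := by
    rw [hf, hlog x hx]
  have hcongr : ∀ r ∈ Set.Ioi x,
      (1 / c) * Real.exp (-r) * (Real.log (1 + c / r) + 1 / r - 1 / (r + c)) = -f' r := by
    intro r hr
    have hr0 : 0 < r := lt_trans hx hr
    simp only [hf']
    rw [hlog r hr0, one_div r, one_div (r + c)]
    ring
  constructor
  · rw [hL, hfx]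
    exact setIntegral_congr_fun measurableSet_Ioi (fun r hr => (hcongr r hr).symm)
  · exact IntegrableOn.congr_fun hint.neg (fun r hr => (hcongr r hr).symm) measurableSet_Ioi


/-- For every `x > 0`, the exponential integral `E_1(x) = ∫_x^∞ e^{−r}/r dr`
satisfies `(1/2) e^{−x} ln(1 + 2/x) < E_1(x) < e^{−x} ln(1 + 1/x)`. -/
theorem exponential_integral_bounds (x : ℝ) (hx : 0 < x) :
    (1 / 2) * Real.exp (-x) * Real.log (1 + 2 / x)
        < (∫ r in Set.Ioi x, Real.exp (-r) / r)
      ∧ (∫ r in Set.Ioi x, Real.exp (-r) / r) < Real.exp (-x) * Real.log (1 + 1 / x) := by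

  have hE : IntegrableOn (fun r => Real.exp (-r) / r) (Set.Ioi x) := by
    apply intOn_of_bound (C := 1 / x)
    · apply ContinuousOn.aestronglyMeasurable _ measurableSet_Ioi
      exact ContinuousOn.div (Real.continuous_exp.comp continuous_neg).continuousOn
        continuousOn_id (fun r hr => (lt_trans hx hr).ne')
    · intro r hr
      have hr0 : 0 < r := lt_trans hx hr
      rw [abs_of_pos (by positivity)]
      have h1 : Real.exp (-r) / r ≤ Real.exp (-r) / x :=
        div_le_div_of_nonneg_left (Real.exp_pos _).le hx (le_of_lt hr)
      calc Real.exp (-r) / r ≤ Real.exp (-r) / x := h1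
        _ = (1 / x) * Real.exp (-r) := by ring
  obtain ⟨eq1, int1⟩ := repr_lemma (c := 1) one_pos hx
  obtain ⟨eq2, int2⟩ := repr_lemma (c := 2) two_pos hx
  constructor
  · -- lower bound
    have hpos : 0 < ∫ r in Set.Ioi x, (Real.exp (-r) / r
        - (1 / 2) * Real.exp (-r) * (Real.log (1 + 2 / r) + 1 / r - 1 / (r + 2))) := by
      apply integral_pos_Ioi (hE.sub int2)
      intro r hr
      simp only [Pi.sub_apply]
      have hr0 : 0 < r := lt_trans hx hr
      have hB := ineqB hr0
      have heq : Real.exp (-r) / r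
          - (1 / 2) * Real.exp (-r) * (Real.log (1 + 2 / r) + 1 / r - 1 / (r + 2))
          = (1 / 2) * Real.exp (-r) * (1 / r + 1 / (r + 2) - Real.log (1 + 2 / r)) := by
        field_simp
        ring
      rw [heq]
      have : 0 < 1 / r + 1 / (r + 2) - Real.log (1 + 2 / r) := by linarith
      positivity
    rw [integral_sub hE int2, ← eq2] at hpos
    linarith
  · -- upper bound
    have hpos : 0 < ∫ r in Set.Ioi x, ((1 / 1) * Real.exp (-r)
        * (Real.log (1 + 1 / r) + 1 / r - 1 / (r + 1)) - Real.exp (-r) / r) := by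
      apply integral_pos_Ioi (int1.sub hE)
      intro r hr
      simp only [Pi.sub_apply]
      have hr0 : 0 < r := lt_trans hx hr
      have hA := ineqA hr0
      have heq : (1 / 1) * Real.exp (-r) * (Real.log (1 + 1 / r) + 1 / r - 1 / (r + 1))
          - Real.exp (-r) / r
          = Real.exp (-r) * (Real.log (1 + 1 / r) - 1 / (r + 1)) := by
        field_simp
        ring
      rw [heq]
      have : 0 < Real.log (1 + 1 / r) - 1 / (r + 1) := by linarith
      positivity
    rw [integral_sub int1 hE, ← eq1] at hpos
    have h11 : (1 / 1 : ℝ) * Real.exp (-x) * Real.log (1 + 1 / x)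
        = Real.exp (-x) * Real.log (1 + 1 / x) := by norm_num
    rw [h11] at hpos
    linarith
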